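/- Let H be a τ-subgraph-plus (a τ-subgraph possibly together with isolated variable-vertices, each isolated vertex contributing 2 credits to revenue) with at most SMALL constraints and R(H) ≤ r. Let H' be a τ-subgraph with at most SMALL constraints having at most s leaf variable-vertices not in H. Assume r + s ≤ ζ·SMALL and the Plausibility Assumption holds. Then H ∪ H' has at most SMALL constraints and R(H ∪ H') ≤ r + s. -/
import Mathlib


open scoped Classical
open Finset

namespace CSP

variable {Cn Vr : Type*} [Fintype Cn] [Fintype Vr] [DecidableEq Cn] [DecidableEq Vr]

/-- Constraint-vertices of an edge-induced subgraph (given as a set of edges). -/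
def consOf (H : Finset (Cn × Vr)) : Finset Cn := H.image Prod.fst

/-- Variable-vertices of an edge-induced subgraph. -/
def vbls (H : Finset (Cn × Vr)) : Finset Vr := H.image Prod.snd

/-- Degree of a constraint-vertex within `H`. -/
def degC (H : Finset (Cn × Vr)) (f : Cn) : ℕ := (H.filter fun e => e.1 = f).card

/-- Degree of a variable-vertex within `H`. -/
def degV (H : Finset (Cn × Vr)) (v : Vr) : ℕ := (H.filter fun e => e.2 = v).card

/-- Leaf variable-vertices: those of degree exactly 1. -/
def leaves (H : Finset (Cn × Vr)) : Finset Vr := (vbls H).filter fun v => degV H v = 1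

/-- Revenue: one credit per leaf variable-vertex, minus a debit for each excess edge
(edges beyond 2 at a variable-vertex, beyond `τ` at a constraint-vertex). -/
def revenue (τ : ℕ) (H : Finset (Cn × Vr)) : ℝ :=
  ((leaves H).card : ℝ)
    - (((∑ v ∈ vbls H, (degV H v - 2)) + ∑ f ∈ consOf H, (degC H f - τ) : ℕ) : ℝ)

/-- A `τ`-subgraph: every constraint-vertex has degree at least `τ`. -/
def IsTau (τ : ℕ) (H : Finset (Cn × Vr)) : Prop := ∀ f ∈ consOf H, τ ≤ degC H f

/-- Plausibility: income `R(H) - ζ·|consOf H|` is nonnegative. -/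
def Plausible (τ : ℕ) (ζ : ℝ) (H : Finset (Cn × Vr)) : Prop :=
  ζ * ((consOf H).card : ℝ) ≤ revenue τ H

/-- The Plausibility Assumption for a factor graph with edge set `E`. -/
def PlausibilityAssumption (τ : ℕ) (ζ : ℝ) (SMALL : ℕ) (E : Finset (Cn × Vr)) : Prop :=
  ∀ H ⊆ E, IsTau τ H → (consOf H).card ≤ 2 * SMALL → Plausible τ ζ H

/-- `S`-closed: a `τ`-subgraph all of whose leaf variable-vertices lie in `S`. -/
def SClosed (τ : ℕ) (S : Finset Vr) (H : Finset (Cn × Vr)) : Prop :=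
  IsTau τ H ∧ leaves H ⊆ S

/-- The closure of `S`: the union of all small `S`-closed `τ`-subgraphs of `E`. -/
noncomputable def closure (τ SMALL : ℕ) (E : Finset (Cn × Vr)) (S : Finset Vr) :
    Finset (Cn × Vr) :=
  (E.powerset.filter fun H => SClosed τ S H ∧ (consOf H).card ≤ SMALL).sup id

end CSP

open CSP

/-- Revenue of a τ-subgraph-plus: the τ-subgraph `H` together with a set `W` of isolated
variable-vertices, each isolated vertex contributing 2 credits. -/
noncomputable def revenuePlus {Cn Vr : Type*} [Fintype Cn] [Fintype Vr]
    [DecidableEq Cn] [DecidableEq Vr] (τ : ℕ) (H : Finset (Cn × Vr)) (W : Finset Vr) : ℝ :=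
  revenue τ H + 2 * (W.card : ℝ)

set_option linter.unusedSectionVars false

section Aux

variable {Cn Vr : Type*} [Fintype Cn] [Fintype Vr] [DecidableEq Cn] [DecidableEq Vr]

lemma mem_vbls_iff {H : Finset (Cn × Vr)} {v : Vr} : v ∈ vbls H ↔ 0 < degV H v := by
  simp [vbls, degV, Finset.card_pos, Finset.filter_nonempty_iff, Finset.mem_image]

lemma degV_mono {H H' : Finset (Cn × Vr)} (h : H ⊆ H') (v : Vr) :
    degV H v ≤ degV H' v :=
  Finset.card_le_card (Finset.filter_subset_filter _ h)

lemma degC_mono {H H' : Finset (Cn × Vr)} (h : H ⊆ H') (f : Cn) :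
    degC H f ≤ degC H' f :=
  Finset.card_le_card (Finset.filter_subset_filter _ h)

lemma debit_mono (τ : ℕ) {H U : Finset (Cn × Vr)} (h : H ⊆ U) :
    ((∑ v ∈ vbls H, (degV H v - 2)) + ∑ f ∈ consOf H, (degC H f - τ)) ≤
    ((∑ v ∈ vbls U, (degV U v - 2)) + ∑ f ∈ consOf U, (degC U f - τ)) := by
  refine Nat.add_le_add ?_ ?_
  · calc ∑ v ∈ vbls H, (degV H v - 2) ≤ ∑ v ∈ vbls H, (degV U v - 2) :=
          Finset.sum_le_sum fun v _ => Nat.sub_le_sub_right (degV_mono h v) 2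
      _ ≤ ∑ v ∈ vbls U, (degV U v - 2) :=
          Finset.sum_le_sum_of_subset (Finset.image_subset_image h)
  · calc ∑ f ∈ consOf H, (degC H f - τ) ≤ ∑ f ∈ consOf H, (degC U f - τ) :=
          Finset.sum_le_sum fun f _ => Nat.sub_le_sub_right (degC_mono h f) τ
      _ ≤ ∑ f ∈ consOf U, (degC U f - τ) :=
          Finset.sum_le_sum_of_subset (Finset.image_subset_image h)

lemma leaves_union_subset (H H' : Finset (Cn × Vr)) (W : Finset Vr) :
    leaves (H ∪ H') ⊆
      leaves H ∪ (W ∩ vbls (H ∪ H')) ∪ ((leaves H') \ (vbls H ∪ W)) := by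
  intro v hv
  have hvU : v ∈ vbls (H ∪ H') := (Finset.mem_filter.1 hv).1
  have hdU : degV (H ∪ H') v = 1 := (Finset.mem_filter.1 hv).2
  by_cases hH : v ∈ vbls H
  · have h1 : 0 < degV H v := mem_vbls_iff.1 hH
    have h2 : degV H v ≤ 1 := hdU ▸ degV_mono Finset.subset_union_left v
    have : v ∈ leaves H := Finset.mem_filter.2 ⟨hH, le_antisymm h2 h1⟩
    exact Finset.mem_union_left _ (Finset.mem_union_left _ this)
  · by_cases hWv : v ∈ W
    · exact Finset.mem_union_left _
        (Finset.mem_union_right _ (Finset.mem_inter.2 ⟨hWv, hvU⟩))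
    · refine Finset.mem_union_right _ (Finset.mem_sdiff.2 ⟨?_, ?_⟩)
      · -- v is a leaf of H'
        have hH0 : degV H v = 0 := by
          by_contra hne
          exact hH (mem_vbls_iff.2 (Nat.pos_of_ne_zero hne))
        have hle : degV (H ∪ H') v ≤ degV H v + degV H' v := by
          unfold degV
          rw [Finset.filter_union]
          exact Finset.card_union_le _ _
        have h1 : 0 < degV H' v := by omega
        have h2 : degV H' v ≤ 1 := hdU ▸ degV_mono Finset.subset_union_right v
        exact Finset.mem_filter.2 ⟨mem_vbls_iff.2 h1, le_antisymm h2 h1⟩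
      · simp [hH, hWv]

end Aux

/-- Union-revenue lemma: if `(H, W)` is a small τ-subgraph-plus with revenue ≤ r, and `H'`
is a small τ-subgraph with at most `s` leaves outside `H ∪ W`, with `r + s ≤ ζ·SMALL` and
the Plausibility Assumption, then the union is small and has revenue ≤ r + s. -/
theorem stmt_7 {Cn Vr : Type*} [Fintype Cn] [Fintype Vr] [DecidableEq Cn] [DecidableEq Vr]
    (τ SMALL : ℕ) (hτ : 3 ≤ τ) (hSMALL : 1 ≤ SMALL)
    (ζ : ℝ) (hζ0 : 0 < ζ) (hζ1 : ζ < 1)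
    (E : Finset (Cn × Vr)) (hPA : PlausibilityAssumption τ ζ SMALL E)
    (r : ℝ) (s : ℕ)
    (H : Finset (Cn × Vr)) (W : Finset Vr)
    (hHE : H ⊆ E) (hHtau : IsTau τ H) (hW : Disjoint W (vbls H))
    (hHsmall : (consOf H).card ≤ SMALL) (hHrev : revenuePlus τ H W ≤ r)
    (H' : Finset (Cn × Vr)) (hH'E : H' ⊆ E) (hH'tau : IsTau τ H')
    (hH'small : (consOf H').card ≤ SMALL)
    (hleaves : ((leaves H') \ (vbls H ∪ W)).card ≤ s)
    (hrs : r + (s : ℝ) ≤ ζ * SMALL) :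
    (consOf (H ∪ H')).card ≤ SMALL ∧
      revenuePlus τ (H ∪ H') (W \ vbls (H ∪ H')) ≤ r + s := by
  set U := H ∪ H' with hU
  -- leaves bound
  have hcardW : (W \ vbls U).card + (W ∩ vbls U).card = W.card :=
    Finset.card_sdiff_add_card_inter W (vbls U)
  have hlU : (leaves U).card ≤
      (leaves H).card + (W ∩ vbls U).card + ((leaves H') \ (vbls H ∪ W)).card := by
    calc (leaves U).card
        ≤ (leaves H ∪ (W ∩ vbls U) ∪ ((leaves H') \ (vbls H ∪ W))).card :=
          Finset.card_le_card (leaves_union_subset H H' W)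
      _ ≤ (leaves H ∪ (W ∩ vbls U)).card + ((leaves H') \ (vbls H ∪ W)).card :=
          Finset.card_union_le _ _
      _ ≤ (leaves H).card + (W ∩ vbls U).card + ((leaves H') \ (vbls H ∪ W)).card :=
          Nat.add_le_add_right (Finset.card_union_le _ _) _
  have hdeb := debit_mono (Cn := Cn) (Vr := Vr) τ (Finset.subset_union_left (s₁ := H) (s₂ := H'))
  -- main revenue inequality
  have hrev : revenuePlus τ U (W \ vbls U) ≤ revenuePlus τ H W + s := by
    unfold revenuePlus revenue
    have h1 : ((leaves U).card : ℝ) ≤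
        (leaves H).card + (W ∩ vbls U).card + s := by
      have := hlU.trans (Nat.add_le_add_left hleaves _)
      exact_mod_cast this
    have h2 : (((∑ v ∈ vbls H, (degV H v - 2)) + ∑ f ∈ consOf H, (degC H f - τ) : ℕ) : ℝ) ≤
        (((∑ v ∈ vbls U, (degV U v - 2)) + ∑ f ∈ consOf U, (degC U f - τ) : ℕ) : ℝ) := by
      exact_mod_cast hdeb
    have h3 : ((W \ vbls U).card : ℝ) + ((W ∩ vbls U).card : ℝ) = (W.card : ℝ) := by
      exact_mod_cast hcardW
    linarith
  have hrev2 : revenuePlus τ U (W \ vbls U) ≤ r + s := by linarith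
  refine ⟨?_, hrev2⟩
  -- smallness via plausibility
  have hUtau : IsTau τ U := by
    intro f hf
    rcases Finset.mem_image.1 hf with ⟨e, he, rfl⟩
    rcases Finset.mem_union.1 he with he | he
    · exact le_trans (hHtau _ (Finset.mem_image.2 ⟨e, he, rfl⟩))
        (degC_mono Finset.subset_union_left _)
    · exact le_trans (hH'tau _ (Finset.mem_image.2 ⟨e, he, rfl⟩))
        (degC_mono Finset.subset_union_right _)
  have hUE : U ⊆ E := Finset.union_subset hHE hH'E
  have hUcons : (consOf U).card ≤ 2 * SMALL := by
    have hsub : consOf U ⊆ consOf H ∪ consOf H' := by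
      simp only [consOf, hU, Finset.image_union]
      exact Finset.Subset.rfl
    calc (consOf U).card ≤ (consOf H ∪ consOf H').card := Finset.card_le_card hsub
      _ ≤ (consOf H).card + (consOf H').card := Finset.card_union_le _ _
      _ ≤ 2 * SMALL := by omega
  have hPl := hPA U hUE hUtau hUcons
  have hle : ζ * ((consOf U).card : ℝ) ≤ ζ * (SMALL : ℝ) := by
    have hWpos : (0 : ℝ) ≤ 2 * ((W \ vbls U).card : ℝ) := by positivity
    have : revenue τ U ≤ r + s := by
      have : revenue τ U ≤ revenuePlus τ U (W \ vbls U) := by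
        unfold revenuePlus; linarith
      linarith
    calc ζ * ((consOf U).card : ℝ) ≤ revenue τ U := hPl
      _ ≤ r + s := this
      _ ≤ ζ * SMALL := hrs
  exact_mod_cast le_of_mul_le_mul_left hle hζ0
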